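/- Let (Ω, 𝓕, μ) be a standard Borel probability space, T : Ω → ℝ measurable, E a standard Borel space, X : Ω → E measurable, L > 0 fixed, and H : E → (ℝ → ℝ≥0) with (x,s) ↦ H(x)(s) jointly measurable. Assume that for (μ.map X)-almost every x, the regular conditional distribution of T given X = x is absolutely continuous with respect to Lebesgue measure with density u ↦ 1_{[0,∞)}(u) · H(x)(u) · exp(−∫₀ᵘ H(x)(s) ds). Define the propensity process Θ_L : Ω → (ℝ → ℝ≥0) by Θ_L(ω)(s) = H(X(ω))(s) for s ∈ [0, L) and 0 otherwise. Then (a) for every Borel set A ⊆ [0, L), the conditional expectation of the indicator of {T ∈ A} given σ(X) equals almost surely its conditional expectation given σ(Θ_L); and (b) the conditional expectation of the indicator of {T ≥ L} given σ(X) equals almost surely its conditional expectation given σ(Θ_L). -/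

import Mathlib

open MeasureTheory ProbabilityTheory

namespace PropensityAux

lemma prod_mono_left {α β : Type*} {m₁ m₂ : MeasurableSpace α} (n : MeasurableSpace β)
    (h : m₁ ≤ m₂) : m₁.prod n ≤ m₂.prod n :=
  sup_le_sup (MeasurableSpace.comap_mono h) le_rfl

/-- Parametrized integral against the conditional expectation kernel is jointly
strongly measurable with respect to `m.prod borel`. -/
lemma sm_integral_condexpKernel {Ω : Type*} (m : MeasurableSpace Ω)
    [mΩ : MeasurableSpace Ω]
    [StandardBorelSpace Ω] (μ : Measure Ω) [IsFiniteMeasure μ]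
    {f : Ω × ℝ → ℝ}
    (hf : StronglyMeasurable f) :
    StronglyMeasurable[m.prod (inferInstance : MeasurableSpace ℝ)]
      (fun p : Ω × ℝ => ∫ ω', f (ω', p.2) ∂(condExpKernel μ m p.1)) := by
  letI mp : MeasurableSpace (Ω × ℝ) := m.prod inferInstance
  have hfst : @Measurable (Ω × ℝ) Ω mp m Prod.fst := @measurable_fst Ω ℝ m inferInstance
  let η : @Kernel (Ω × ℝ) Ω mp mΩ := Kernel.comap (condExpKernel μ m) Prod.fst hfst
  haveI : IsSFiniteKernel η := by
    haveI : IsMarkovKernel η := Kernel.IsMarkovKernel.comap _ hfst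
    infer_instance
  have h1 : @Measurable ((Ω × ℝ) × Ω) Ω (mp.prod mΩ) mΩ (fun q => q.2) :=
    @measurable_snd _ _ mp mΩ
  have h2 : @Measurable ((Ω × ℝ) × Ω) ℝ (mp.prod mΩ) _ (fun q => q.1.2) :=
    (@measurable_snd Ω ℝ m _).comp (@measurable_fst _ _ mp mΩ)
  have hf' : StronglyMeasurable[mp.prod mΩ] (fun q : (Ω × ℝ) × Ω => f (q.2, q.1.2)) :=
    hf.comp_measurable (h1.prodMk h2)
  exact hf'.integral_kernel_prod_right' (κ := η)

/-- A jointly measurable nonnegative process whose sections at every time are `m`-measurable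
admits a jointly `m`-measurable modification. -/
lemma exists_modification {Ω : Type*} (m : MeasurableSpace Ω)
    [mΩ : MeasurableSpace Ω]
    [StandardBorelSpace Ω] (μ : Measure Ω) [IsFiniteMeasure μ]
    (hm : m ≤ mΩ)
    (Z : Ω → ℝ → NNReal)
    (hZj : Measurable fun p : Ω × ℝ => Z p.1 p.2)
    (hZs : ∀ s, Measurable[m] fun ω => Z ω s) :
    ∃ Z' : Ω → ℝ → ENNReal,
      Measurable[m.prod (inferInstance : MeasurableSpace ℝ)]
        (fun p : Ω × ℝ => Z' p.1 p.2) ∧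
      ∀ s, ∀ᵐ ω ∂μ, Z' ω s = (Z ω s : ENNReal) := by
  set F : ℕ → Ω × ℝ → ℝ := fun n p => min ((Z p.1 p.2 : ℝ)) n with hF
  have hFsm : ∀ n, StronglyMeasurable (F n) := fun n =>
    ((measurable_coe_nnreal_real.comp hZj).min measurable_const).stronglyMeasurable
  refine ⟨fun ω s => ⨆ n : ℕ, ENNReal.ofReal (∫ ω', F n (ω', s) ∂(condExpKernel μ m ω)),
    ?_, ?_⟩
  · refine Measurable.iSup fun n => ?_
    exact ENNReal.measurable_ofReal.comp (sm_integral_condexpKernel m μ (hFsm n)).measurable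
  · intro s
    have h1 : ∀ n : ℕ, ∀ᵐ ω ∂μ,
        ∫ ω', F n (ω', s) ∂(condExpKernel μ m ω) = F n (ω, s) := by
      intro n
      have hsm : StronglyMeasurable[m] fun ω => F n (ω, s) := by
        refine Measurable.stronglyMeasurable ?_
        exact (measurable_coe_nnreal_real.comp (hZs s)).min measurable_const
      have hint : Integrable (fun ω => F n (ω, s)) μ := by
        refine Integrable.mono' (integrable_const (n : ℝ))
          ((hsm.mono hm).aestronglyMeasurable) ?_
        filter_upwards with ω
        rw [Real.norm_eq_abs, abs_of_nonneg (le_min (Z ω s).coe_nonneg (Nat.cast_nonneg n))]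
        exact min_le_right _ _
      have h2 := condExp_ae_eq_integral_condExpKernel (μ := μ) hm hint
      have h3 := condExp_of_stronglyMeasurable hm hsm hint
      filter_upwards [h2] with ω hω
      rw [h3] at hω
      exact hω.symm
    have h4 : ∀ᵐ ω ∂μ, ∀ n : ℕ,
        ∫ ω', F n (ω', s) ∂(condExpKernel μ m ω) = F n (ω, s) := ae_all_iff.2 h1
    filter_upwards [h4] with ω hω
    have hrw : ∀ n : ℕ, ENNReal.ofReal (∫ ω', F n (ω', s) ∂(condExpKernel μ m ω)) =
        ENNReal.ofReal (min ((Z ω s : ℝ)) n) := fun n => by rw [hω n]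
    simp only [hrw]
    apply le_antisymm
    · refine iSup_le fun n => ?_
      calc ENNReal.ofReal (min ((Z ω s : ℝ)) n) ≤ ENNReal.ofReal ((Z ω s : ℝ)) :=
            ENNReal.ofReal_le_ofReal (min_le_left _ _)
        _ = (Z ω s : ENNReal) := ENNReal.ofReal_coe_nnreal
    · have h5 : ENNReal.ofReal ((Z ω s : ℝ)) ≤
          ⨆ n : ℕ, ENNReal.ofReal (min ((Z ω s : ℝ)) n) :=
        le_iSup_of_le ⌈(Z ω s : ℝ)⌉₊ (by rw [min_eq_left (Nat.le_ceil _)])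
      rwa [ENNReal.ofReal_coe_nnreal] at h5

/-- Joint strong measurability of the running interval integral of a jointly measurable
`ℝ≥0∞`-valued process. -/
lemma sm_intervalIntegral {α : Type*} {mα : MeasurableSpace α}
    {f : α × ℝ → ENNReal}
    (hf : Measurable[mα.prod (inferInstance : MeasurableSpace ℝ)] f) :
    StronglyMeasurable[mα.prod (inferInstance : MeasurableSpace ℝ)]
      (fun p : α × ℝ => ∫ s in (0:ℝ)..p.2, (f (p.1, s)).toReal) := by
  letI mp : MeasurableSpace (α × ℝ) := mα.prod inferInstance
  have hmeas : Measurable[mp.prod (inferInstance : MeasurableSpace ℝ)]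
      (fun q : (α × ℝ) × ℝ => (f (q.1.1, q.2)).toReal) := by
    refine Measurable.ennreal_toReal ?_
    exact hf.comp ((measurable_fst.comp measurable_fst).prodMk measurable_snd)
  have hS1 : MeasurableSet[mp.prod (inferInstance : MeasurableSpace ℝ)]
      {q : (α × ℝ) × ℝ | q.2 ∈ Set.Ioc (0:ℝ) q.1.2} := by
    have : {q : (α × ℝ) × ℝ | q.2 ∈ Set.Ioc (0:ℝ) q.1.2}
        = {q : (α × ℝ) × ℝ | (0:ℝ) < q.2} ∩ {q : (α × ℝ) × ℝ | q.2 ≤ q.1.2} := by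
      ext q; simp [Set.mem_Ioc, and_comm]
    rw [this]
    exact (measurableSet_lt measurable_const measurable_snd).inter
      (measurableSet_le measurable_snd ((measurable_snd.comp measurable_fst)))
  have hS2 : MeasurableSet[mp.prod (inferInstance : MeasurableSpace ℝ)]
      {q : (α × ℝ) × ℝ | q.2 ∈ Set.Ioc q.1.2 (0:ℝ)} := by
    have : {q : (α × ℝ) × ℝ | q.2 ∈ Set.Ioc q.1.2 (0:ℝ)}
        = {q : (α × ℝ) × ℝ | q.1.2 < q.2} ∩ {q : (α × ℝ) × ℝ | q.2 ≤ (0:ℝ)} := by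
      ext q; simp [Set.mem_Ioc]
    rw [this]
    exact (measurableSet_lt (measurable_snd.comp measurable_fst) measurable_snd).inter
      (measurableSet_le measurable_snd measurable_const)
  have h1 : StronglyMeasurable[mp]
      (fun p : α × ℝ => ∫ s, ({q : (α × ℝ) × ℝ | q.2 ∈ Set.Ioc (0:ℝ) q.1.2}.indicator
        (fun q => (f (q.1.1, q.2)).toReal)) (p, s)) :=
    StronglyMeasurable.integral_prod_right' (ν := volume)
      ((hmeas.indicator hS1).stronglyMeasurable)
  have h2 : StronglyMeasurable[mp]
      (fun p : α × ℝ => ∫ s, ({q : (α × ℝ) × ℝ | q.2 ∈ Set.Ioc q.1.2 (0:ℝ)}.indicator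
        (fun q => (f (q.1.1, q.2)).toReal)) (p, s)) :=
    StronglyMeasurable.integral_prod_right' (ν := volume)
      ((hmeas.indicator hS2).stronglyMeasurable)
  have key : (fun p : α × ℝ => ∫ s in (0:ℝ)..p.2, (f (p.1, s)).toReal)
      = fun p : α × ℝ =>
        (∫ s, ({q : (α × ℝ) × ℝ | q.2 ∈ Set.Ioc (0:ℝ) q.1.2}.indicator
          (fun q => (f (q.1.1, q.2)).toReal)) (p, s))
        - ∫ s, ({q : (α × ℝ) × ℝ | q.2 ∈ Set.Ioc q.1.2 (0:ℝ)}.indicator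
          (fun q => (f (q.1.1, q.2)).toReal)) (p, s) := by
    funext p
    have e1 : (fun s => ({q : (α × ℝ) × ℝ | q.2 ∈ Set.Ioc (0:ℝ) q.1.2}.indicator
        (fun q => (f (q.1.1, q.2)).toReal)) (p, s))
        = (Set.Ioc (0:ℝ) p.2).indicator (fun s => (f (p.1, s)).toReal) := by
      funext s
      simp only [Set.indicator_apply, Set.mem_setOf_eq]
    have e2 : (fun s => ({q : (α × ℝ) × ℝ | q.2 ∈ Set.Ioc q.1.2 (0:ℝ)}.indicator
        (fun q => (f (q.1.1, q.2)).toReal)) (p, s))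
        = (Set.Ioc p.2 (0:ℝ)).indicator (fun s => (f (p.1, s)).toReal) := by
      funext s
      simp only [Set.indicator_apply, Set.mem_setOf_eq]
    rw [e1, e2, integral_indicator measurableSet_Ioc, integral_indicator measurableSet_Ioc]
    rfl
  rw [key]
  exact h1.sub h2

/-- Measurability (w.r.t. a given σ-algebra) of the density functional built from a jointly
measurable `ℝ≥0∞`-valued process. -/
lemma F_measurable {α : Type*} {mα : MeasurableSpace α} {Θ' : α → ℝ → ENNReal}
    (h : Measurable[mα.prod (inferInstance : MeasurableSpace ℝ)]
      fun p : α × ℝ => Θ' p.1 p.2) :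
    Measurable[mα.prod (inferInstance : MeasurableSpace ℝ)] fun p : α × ℝ =>
      Set.indicator (Set.Ici (0 : ℝ))
        (fun v => ENNReal.ofReal
          ((Θ' p.1 v).toReal * Real.exp (-∫ s in (0 : ℝ)..v, (Θ' p.1 s).toReal))) p.2 := by
  have hIsm := sm_intervalIntegral h
  have hset : MeasurableSet[mα.prod (inferInstance : MeasurableSpace ℝ)]
      {p : α × ℝ | p.2 ∈ Set.Ici (0 : ℝ)} := measurable_snd measurableSet_Ici
  have hval : Measurable[mα.prod (inferInstance : MeasurableSpace ℝ)]
      (fun p : α × ℝ => ENNReal.ofReal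
        ((Θ' p.1 p.2).toReal * Real.exp (-∫ s in (0 : ℝ)..p.2, (Θ' p.1 s).toReal))) := by
    refine ENNReal.measurable_ofReal.comp ?_
    exact h.ennreal_toReal.mul (Real.measurable_exp.comp hIsm.measurable.neg)
  have hrw : (fun p : α × ℝ =>
      Set.indicator (Set.Ici (0 : ℝ))
        (fun v => ENNReal.ofReal
          ((Θ' p.1 v).toReal * Real.exp (-∫ s in (0 : ℝ)..v, (Θ' p.1 s).toReal))) p.2)
      = fun p : α × ℝ =>
        Set.indicator {p : α × ℝ | p.2 ∈ Set.Ici (0 : ℝ)}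
          (fun p : α × ℝ => ENNReal.ofReal
            ((Θ' p.1 p.2).toReal *
              Real.exp (-∫ s in (0 : ℝ)..p.2, (Θ' p.1 s).toReal))) p := by
    funext p
    simp only [Set.indicator_apply, Set.mem_setOf_eq]
  rw [hrw]
  exact hval.indicator hset

/-- `toReal` of a parametrized lintegral is strongly measurable w.r.t. a given σ-algebra. -/
lemma sm_toReal_lintegral {α : Type*} {mα : MeasurableSpace α} (ν : Measure ℝ) [SFinite ν]
    {f : α × ℝ → ENNReal}
    (hf : Measurable[mα.prod (inferInstance : MeasurableSpace ℝ)] f) :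
    StronglyMeasurable[mα] fun x => (∫⁻ y, f (x, y) ∂ν).toReal := by
  have h1 : Measurable[mα] fun x => ∫⁻ y, f (x, y) ∂ν :=
    Measurable.lintegral_prod_right' hf
  exact h1.ennreal_toReal.stronglyMeasurable

/-- Splitting off the indicator of `{T ≥ L}` as `1` minus the indicator of `{T ∈ [0, L)}`,
at the level of conditional expectations. -/
lemma condexp_indicator_Ici_split {Ω : Type*} (m : MeasurableSpace Ω)
    [mΩ : MeasurableSpace Ω] (hm : m ≤ mΩ) (μ : Measure Ω) [IsFiniteMeasure μ]
    (T : Ω → ℝ) (hT : Measurable T) (L : ℝ)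
    (hind : Set.indicator (T ⁻¹' Set.Iio L) (fun _ => (1 : ℝ))
      =ᵐ[μ] Set.indicator (T ⁻¹' Set.Ico 0 L) (fun _ => (1 : ℝ))) :
    μ[Set.indicator (T ⁻¹' Set.Ici L) (fun _ => (1 : ℝ)) | m]
      =ᵐ[μ] (fun _ => (1 : ℝ)) -
        μ[Set.indicator (T ⁻¹' Set.Ico 0 L) (fun _ => (1 : ℝ)) | m] := by
  have hfun : Set.indicator (T ⁻¹' Set.Ici L) (fun _ => (1 : ℝ))
      = (fun _ => (1 : ℝ)) - Set.indicator (T ⁻¹' Set.Iio L) (fun _ => (1 : ℝ)) := by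
    classical
    funext ω
    simp only [Pi.sub_apply]
    by_cases h : L ≤ T ω
    · rw [Set.indicator_of_mem (by simpa using h),
        Set.indicator_of_notMem (by simpa using not_lt.2 h)]
      norm_num
    · rw [Set.indicator_of_notMem (by simpa using h),
        Set.indicator_of_mem (by simpa using not_le.1 h)]
      norm_num
  rw [hfun]
  have h1 := condExp_sub (μ := μ) (m := m) (integrable_const (1 : ℝ))
    ((integrable_const (1 : ℝ)).indicator
      (hT (measurableSet_Iio : MeasurableSet (Set.Iio L))))
  refine h1.trans ?_
  rw [condExp_const hm (1 : ℝ)]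
  exact Filter.EventuallyEq.sub (Filter.EventuallyEq.refl _ _) (condExp_congr_ae hind)

end PropensityAux

open PropensityAux

/-- Key intermediate step in the proof of Proposition 1: under the hazard model for treatment
assignment, (a) for every Borel set `A ⊆ [0, L)` the conditional expectation of the indicator of
`{T ∈ A}` given `σ(X)` equals a.s. its conditional expectation given `σ(Θ_L)`, and (b) the same
holds for the indicator of `{T ≥ L}`. -/
theorem condexp_indicator_eq_given_propensityProcess
    {Ω E : Type*}
    [MeasurableSpace Ω] [StandardBorelSpace Ω] [Nonempty Ω]
    [MeasurableSpace E] [StandardBorelSpace E]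
    (μ : Measure Ω) [IsProbabilityMeasure μ]
    (T : Ω → ℝ) (X : Ω → E) (hT : Measurable T) (hX : Measurable X)
    (L : ℝ) (hL : 0 < L)
    (H : E → ℝ → NNReal) (hH : Measurable fun p : E × ℝ => H p.1 p.2)
    (hdens : ∀ᵐ x ∂(μ.map X), condDistrib T X μ x =
      volume.withDensity fun u : ℝ =>
        Set.indicator (Set.Ici (0 : ℝ))
          (fun v => ENNReal.ofReal
            ((H x v : ℝ) * Real.exp (-∫ s in (0 : ℝ)..v, (H x s : ℝ)))) u) :
    (∀ A : Set ℝ, MeasurableSet A → A ⊆ Set.Ico (0 : ℝ) L →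
      μ[Set.indicator (T ⁻¹' A) (fun _ => (1 : ℝ)) | MeasurableSpace.comap X inferInstance]
        =ᵐ[μ]
      μ[Set.indicator (T ⁻¹' A) (fun _ => (1 : ℝ)) |
          MeasurableSpace.comap
            (fun ω => fun s : ℝ => if s ∈ Set.Ico (0 : ℝ) L then H (X ω) s else 0)
            inferInstance]) ∧
    (μ[Set.indicator (T ⁻¹' Set.Ici L) (fun _ => (1 : ℝ)) |
        MeasurableSpace.comap X inferInstance]
      =ᵐ[μ]
    μ[Set.indicator (T ⁻¹' Set.Ici L) (fun _ => (1 : ℝ)) |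
        MeasurableSpace.comap
          (fun ω => fun s : ℝ => if s ∈ Set.Ico (0 : ℝ) L then H (X ω) s else 0)
          inferInstance]) := by
  classical
  set g : E → ℝ → NNReal := fun x => fun s : ℝ => if s ∈ Set.Ico (0 : ℝ) L then H x s else 0
    with hgdef
  have hgm : Measurable g := by
    refine measurable_pi_lambda g fun s => ?_
    simp only [hgdef]
    by_cases hs : s ∈ Set.Ico (0 : ℝ) L
    · simp only [hs, if_true]
      exact hH.comp (measurable_id.prodMk measurable_const)
    · simp only [hs, if_false]
      exact measurable_const
  set Θ : Ω → ℝ → NNReal :=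
    fun ω => fun s : ℝ => if s ∈ Set.Ico (0 : ℝ) L then H (X ω) s else 0 with hΘdef
  have hΘg : Θ = g ∘ X := rfl
  have hΘ : Measurable Θ := hgm.comp hX
  have hGX : MeasurableSpace.comap Θ inferInstance ≤ MeasurableSpace.comap X inferInstance := by
    rw [hΘg, ← MeasurableSpace.comap_comp]
    exact MeasurableSpace.comap_mono hgm.comap_le
  have hXm : MeasurableSpace.comap X inferInstance ≤ (inferInstance : MeasurableSpace Ω) :=
    hX.comap_le
  have hGm : (MeasurableSpace.comap Θ inferInstance) ≤ (inferInstance : MeasurableSpace Ω) := hGX.trans hXm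
  have hΘj : Measurable fun p : Ω × ℝ => Θ p.1 p.2 := by
    have hrw : (fun p : Ω × ℝ => Θ p.1 p.2)
        = fun p : Ω × ℝ => if p.2 ∈ Set.Ico (0 : ℝ) L then H (X p.1) p.2 else 0 := rfl
    rw [hrw]
    exact Measurable.ite (measurable_snd measurableSet_Ico)
      (hH.comp ((hX.comp measurable_fst).prodMk measurable_snd)) measurable_const
  have hΘG : Measurable[MeasurableSpace.comap Θ inferInstance] Θ := measurable_iff_comap_le.mpr le_rfl
  have hZs : ∀ s, Measurable[(MeasurableSpace.comap Θ inferInstance)] fun ω => Θ ω s := fun s => (measurable_pi_apply s).comp hΘG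
  obtain ⟨Θ', hΘ'm, hΘ'fix⟩ := exists_modification (MeasurableSpace.comap Θ inferInstance) μ hGm Θ hΘj hZs
  -- Fubini step: almost every trajectory of `Θ'` agrees a.e. on `[0, L]` with that of `Θ`.
  set ν : Measure ℝ := volume.restrict (Set.Icc (0 : ℝ) L) with hνdef
  have hΘ'big : Measurable fun p : Ω × ℝ => Θ' p.1 p.2 :=
    hΘ'm.mono (prod_mono_left _ hGm) le_rfl
  have hcoe : Measurable fun p : Ω × ℝ => (Θ p.1 p.2 : ENNReal) :=
    measurable_coe_nnreal_ennreal.comp hΘj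
  have hNmeas : MeasurableSet {p : Ω × ℝ | Θ' p.1 p.2 = (Θ p.1 p.2 : ENNReal)} :=
    MeasureTheory.StronglyMeasurable.measurableSet_eq_fun hΘ'big.stronglyMeasurable hcoe.stronglyMeasurable
  have hsec : ∀ s : ℝ, μ {ω | ¬ (Θ' ω s = (Θ ω s : ENNReal))} = 0 :=
    fun s => ae_iff.mp (hΘ'fix s)
  have hprod : (μ.prod ν) {p : Ω × ℝ | Θ' p.1 p.2 = (Θ p.1 p.2 : ENNReal)}ᶜ = 0 := by
    rw [Measure.prod_apply_symm hNmeas.compl]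
    have hpre : ∀ s : ℝ,
        μ ((fun ω => (ω, s)) ⁻¹' {p : Ω × ℝ | Θ' p.1 p.2 = (Θ p.1 p.2 : ENNReal)}ᶜ) = 0 :=
      fun s => hsec s
    calc (∫⁻ s, μ ((fun ω => (ω, s)) ⁻¹'
            {p : Ω × ℝ | Θ' p.1 p.2 = (Θ p.1 p.2 : ENNReal)}ᶜ) ∂ν)
        = ∫⁻ _, 0 ∂ν := lintegral_congr hpre
      _ = 0 := lintegral_zero
  have hae : ∀ᵐ p ∂(μ.prod ν), Θ' p.1 p.2 = (Θ p.1 p.2 : ENNReal) := by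
    rw [ae_iff]
    exact hprod
  have hae2 : ∀ᵐ ω ∂μ, ∀ᵐ s ∂ν, Θ' ω s = (Θ ω s : ENNReal) := Measure.ae_ae_of_ae_prod hae
  -- pull back the density hypothesis
  have hdens' : ∀ᵐ ω ∂μ, condDistrib T X μ (X ω) =
      volume.withDensity fun u : ℝ =>
        Set.indicator (Set.Ici (0 : ℝ))
          (fun v => ENNReal.ofReal
            ((H (X ω) v : ℝ) * Real.exp (-∫ s in (0 : ℝ)..v, (H (X ω) s : ℝ)))) u :=
    ae_of_ae_map hX.aemeasurable hdens
  -- the candidate σ(Θ)-measurable density functional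
  have hIsm : StronglyMeasurable[(MeasurableSpace.comap Θ inferInstance).prod (inferInstance : MeasurableSpace ℝ)]
      (fun p : Ω × ℝ => ∫ s in (0 : ℝ)..p.2, (Θ' p.1 s).toReal) :=
    sm_intervalIntegral hΘ'm
  set F : Ω × ℝ → ENNReal := fun p =>
    Set.indicator (Set.Ici (0 : ℝ))
      (fun v => ENNReal.ofReal
        ((Θ' p.1 v).toReal * Real.exp (-∫ s in (0 : ℝ)..v, (Θ' p.1 s).toReal))) p.2 with hFdef
  have hFmeas : Measurable[(MeasurableSpace.comap Θ inferInstance).prod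
      (inferInstance : MeasurableSpace ℝ)] F :=
    F_measurable hΘ'm
  -- the main claim, for a fixed Borel subset of [0, L)
  have key : ∀ A : Set ℝ, MeasurableSet A → A ⊆ Set.Ico (0 : ℝ) L →
      μ[Set.indicator (T ⁻¹' A) (fun _ => (1 : ℝ)) | MeasurableSpace.comap X inferInstance]
        =ᵐ[μ] μ[Set.indicator (T ⁻¹' A) (fun _ => (1 : ℝ)) | (MeasurableSpace.comap Θ inferInstance)] := by
    intro A hA hAsub
    set D : Ω → ℝ := fun ω => (∫⁻ u in A,
      Set.indicator (Set.Ici (0 : ℝ))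
        (fun v => ENNReal.ofReal
          ((H (X ω) v : ℝ) * Real.exp (-∫ s in (0 : ℝ)..v, (H (X ω) s : ℝ)))) u
        ∂volume).toReal with hDdef
    set D' : Ω → ℝ := fun ω => (∫⁻ u in A, F (ω, u) ∂volume).toReal with hD'def
    have hcondD : ∀ᵐ ω ∂μ, (condDistrib T X μ (X ω) A).toReal = D ω := by
      filter_upwards [hdens'] with ω hω
      rw [hDdef, hω, withDensity_apply _ hA]
    have hLX : μ[Set.indicator (T ⁻¹' A) (fun _ => (1 : ℝ)) |
        MeasurableSpace.comap X inferInstance] =ᵐ[μ] D :=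
      ((condDistrib_ae_eq_condExp hX hT hA).symm.trans hcondD)
    have hD'sm : StronglyMeasurable[(MeasurableSpace.comap Θ inferInstance)] D' :=
      sm_toReal_lintegral (volume.restrict A) hFmeas
    have hDD' : D' =ᵐ[μ] D := by
      filter_upwards [hae2] with ω hω
      have hω' : ∀ᵐ s ∂(volume : Measure ℝ),
          s ∈ Set.Icc (0 : ℝ) L → Θ' ω s = (Θ ω s : ENNReal) :=
        (ae_restrict_iff' measurableSet_Icc).1 hω
      have hval : ∀ s ∈ Set.Ico (0 : ℝ) L, Θ ω s = H (X ω) s := by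
        intro s hs
        simp only [hΘdef]
        exact if_pos hs
      have hI : ∀ u ∈ A, (∫ s in (0 : ℝ)..u, (Θ' ω s).toReal)
          = ∫ s in (0 : ℝ)..u, (H (X ω) s : ℝ) := by
        intro u hu
        obtain ⟨hu0, huL⟩ := hAsub hu
        refine intervalIntegral.integral_congr_ae ?_
        filter_upwards [hω'] with s hs hsmem
        rw [Set.uIoc_of_le hu0] at hsmem
        have h1 : Θ' ω s = (Θ ω s : ENNReal) := hs ⟨hsmem.1.le, hsmem.2.trans huL.le⟩
        rw [h1, ENNReal.coe_toReal, hval s ⟨hsmem.1.le, lt_of_le_of_lt hsmem.2 huL⟩]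
      have hInt : (∫⁻ u in A, F (ω, u) ∂volume) = ∫⁻ u in A,
          Set.indicator (Set.Ici (0 : ℝ))
            (fun v => ENNReal.ofReal
              ((H (X ω) v : ℝ) * Real.exp (-∫ s in (0 : ℝ)..v, (H (X ω) s : ℝ)))) u
            ∂volume := by
        refine lintegral_congr_ae ?_
        filter_upwards [ae_restrict_of_ae hω', ae_restrict_mem hA] with u h1 h2
        obtain ⟨hu0, huL⟩ := hAsub h2
        have hIcc : Θ' ω u = (Θ ω u : ENNReal) := h1 ⟨hu0, huL.le⟩
        simp only [hFdef]
        rw [Set.indicator_of_mem (show u ∈ Set.Ici (0 : ℝ) from hu0),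
          Set.indicator_of_mem (show u ∈ Set.Ici (0 : ℝ) from hu0),
          hIcc, ENNReal.coe_toReal, hval u ⟨hu0, huL⟩, hI u h2]
      rw [hD'def, hDdef]
      simp only []
      rw [hInt]
    have hD'int : Integrable D' μ := by
      refine Integrable.mono' (integrable_const (1 : ℝ))
        ((hD'sm.mono hGm).aestronglyMeasurable) ?_
      filter_upwards [hDD', hcondD] with ω h1 h2
      rw [Real.norm_eq_abs, h1, ← h2, abs_of_nonneg ENNReal.toReal_nonneg]
      have hle := ENNReal.toReal_mono ENNReal.one_ne_top
        (prob_le_one (μ := condDistrib T X μ (X ω)) (s := A))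
      simpa using hle
    have e1 : μ[Set.indicator (T ⁻¹' A) (fun _ => (1 : ℝ)) | (MeasurableSpace.comap Θ inferInstance)]
        =ᵐ[μ] μ[μ[Set.indicator (T ⁻¹' A) (fun _ => (1 : ℝ)) |
          MeasurableSpace.comap X inferInstance] | (MeasurableSpace.comap Θ inferInstance)] :=
      (condExp_condExp_of_le hGX hXm).symm
    have e2 := condExp_congr_ae (m := (MeasurableSpace.comap Θ inferInstance)) (μ := μ) hLX
    have e3 := condExp_congr_ae (m := (MeasurableSpace.comap Θ inferInstance)) (μ := μ) hDD'.symm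
    have e4 : μ[D' | (MeasurableSpace.comap Θ inferInstance)] = D' := condExp_of_stronglyMeasurable hGm hD'sm hD'int
    have eG : μ[Set.indicator (T ⁻¹' A) (fun _ => (1 : ℝ)) | (MeasurableSpace.comap Θ inferInstance)] =ᵐ[μ] D' :=
      e1.trans (e2.trans (e3.trans (by rw [e4])))
    exact (hLX.trans hDD'.symm).trans eG.symm
  refine ⟨key, ?_⟩
  -- part (b)
  have hT0 : μ (T ⁻¹' Set.Iio (0 : ℝ)) = 0 := by
    have h := setLIntegral_preimage_condDistrib hX (hT.aemeasurable : AEMeasurable T μ)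
      (measurableSet_Iio : MeasurableSet (Set.Iio (0 : ℝ))) MeasurableSet.univ
    simp only [Set.preimage_univ, Measure.restrict_univ, Set.univ_inter] at h
    rw [← h]
    have hzero : ∀ᵐ a ∂μ, condDistrib T X μ (X a) (Set.Iio (0 : ℝ)) = 0 := by
      filter_upwards [hdens'] with a ha
      rw [ha, withDensity_apply _ measurableSet_Iio]
      have hz : ∀ u ∈ Set.Iio (0 : ℝ),
          Set.indicator (Set.Ici (0 : ℝ))
            (fun v => ENNReal.ofReal
              ((H (X a) v : ℝ) * Real.exp (-∫ s in (0 : ℝ)..v, (H (X a) s : ℝ)))) u = 0 :=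
        fun u hu => Set.indicator_of_notMem (by simpa using not_le.2 hu) _
      rw [setLIntegral_congr_fun measurableSet_Iio hz]
      simp
    rw [lintegral_congr_ae hzero]
    simp
  have hnneg : ∀ᵐ ω ∂μ, ¬ T ω < 0 := by
    have h := measure_eq_zero_iff_ae_notMem.mp hT0
    filter_upwards [h] with ω hω
    simpa using hω
  have hIndIio : Set.indicator (T ⁻¹' Set.Iio L) (fun _ => (1 : ℝ))
      =ᵐ[μ] Set.indicator (T ⁻¹' Set.Ico 0 L) (fun _ => (1 : ℝ)) := by
    filter_upwards [hnneg] with ω hω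
    have h0 : (0 : ℝ) ≤ T ω := not_lt.1 hω
    simp only [Set.indicator_apply, Set.mem_preimage, Set.mem_Iio, Set.mem_Ico]
    by_cases h : T ω < L
    · rw [if_pos h, if_pos ⟨h0, h⟩]
    · rw [if_neg h, if_neg fun hc => h hc.2]
  have hsplit1 := condexp_indicator_Ici_split (MeasurableSpace.comap X inferInstance) hXm μ
    T hT L hIndIio
  have hsplit2 := condexp_indicator_Ici_split (MeasurableSpace.comap Θ inferInstance) hGm μ
    T hT L hIndIio
  have hA := key (Set.Ico 0 L) measurableSet_Ico (subset_refl _)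
  exact hsplit1.trans
    ((Filter.EventuallyEq.sub (Filter.EventuallyEq.refl _ _) hA).trans hsplit2.symm)
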